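/- The number of semistandard Young tableaux of shape λ (a partition with at most n parts) with entries in {1,...,n} equals the dimension of the irreducible polynomial representation of GL_n(ℂ) with highest weight λ, as computed by the Weyl dimension formula ∏_{1≤i<j≤n} (λ_i - λ_j + j - i)/(j - i). -/

import Mathlib

set_option linter.unusedSectionVars false
set_option maxHeartbeats 1000000

open Finset Polynomial


-- Bernoulli polynomial is monic of degree k
lemma bern_coeff_top (k : ℕ) : (Polynomial.bernoulli k).coeff k = 1 := by
  rw [Polynomial.bernoulli, Polynomial.finset_sum_coeff]
  rw [Finset.sum_eq_single_of_mem 0 (Finset.mem_range.2 (Nat.succ_pos k))]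
  · simp [Polynomial.coeff_monomial]
  · intro i hi hi0
    have hik : i ≤ k := Nat.lt_succ_iff.1 (Finset.mem_range.1 hi)
    rw [Polynomial.coeff_monomial, if_neg (by omega)]

lemma bern_natDegree (k : ℕ) : (Polynomial.bernoulli k).natDegree = k := by
  apply le_antisymm
  · apply Polynomial.natDegree_sum_le_of_forall_le
    intro i hi
    exact le_trans (Polynomial.natDegree_monomial_le _) (Nat.sub_le _ _)
  · apply Polynomial.le_natDegree_of_ne_zero
    rw [bern_coeff_top]; exact one_ne_zero

lemma bern_monic (k : ℕ) : (Polynomial.bernoulli k).Monic := by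
  rw [Polynomial.Monic, Polynomial.leadingCoeff, bern_natDegree, bern_coeff_top]

lemma eval_sub_eval (p u v : ℕ) (h : u ≤ v) :
    Polynomial.eval (v : ℚ) (Polynomial.bernoulli (p + 1)) -
      Polynomial.eval (u : ℚ) (Polynomial.bernoulli (p + 1)) =
    ((p : ℚ) + 1) * ∑ t ∈ Finset.Ico u v, (t : ℚ) ^ p := by
  rw [show p + 1 = p.succ from rfl, Polynomial.bernoulli_succ_eval,
    Polynomial.bernoulli_succ_eval, Finset.sum_Ico_eq_sub _ h]
  ring

lemma fact_prod (m : ℕ) : (∏ j : Fin m, ((j : ℚ) + 1)) = (m.factorial : ℚ) := by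
  induction m with
  | zero => simp
  | succ m ih =>
    rw [Fin.prod_univ_castSucc]
    simp only [Fin.coe_castSucc, Fin.val_last] at *
    rw [ih, Nat.factorial_succ]
    push_cast
    ring

lemma lemA (m : ℕ) (c : Fin (m + 1) → ℕ) (hc : ∀ i : Fin m, c i.castSucc ≤ c i.succ) :
    (m.factorial : ℚ) *
      ∑ d ∈ Fintype.piFinset (fun i : Fin m => Finset.Ico (c i.castSucc) (c i.succ)),
        ∏ i, ∏ j ∈ Finset.Ioi i, ((d j : ℚ) - (d i : ℚ))
    = ∏ i, ∏ j ∈ Finset.Ioi i, ((c j : ℚ) - (c i : ℚ)) := by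
  classical
  set P : Fin (m + 1) → ℚ[X] := fun j => if (j : ℕ) = 0 then 1 else Polynomial.bernoulli j
    with hP
  have hP0 : P 0 = 1 := by simp [hP]
  have hPsucc : ∀ j : Fin m, P j.succ = Polynomial.bernoulli ((j : ℕ) + 1) := by
    intro j; simp [hP, Fin.val_succ]
  set bigM : Matrix (Fin (m + 1)) (Fin (m + 1)) ℚ :=
    Matrix.of fun i j => (P j).eval (c i : ℚ) with hbigM
  set bigB : Matrix (Fin (m + 1)) (Fin (m + 1)) ℚ :=
    Matrix.of fun i => Fin.cases (fun j => bigM 0 j)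
      (fun i' j => bigM i'.succ j - bigM i'.castSucc j) i with hbigB
  -- det bigM = Vandermonde
  have hvdm : bigM.det = ∏ i, ∏ j ∈ Finset.Ioi i, ((c j : ℚ) - (c i : ℚ)) := by
    rw [← Matrix.det_vandermonde]
    symm
    apply Matrix.det_eval_matrixOfPolynomials_eq_det_vandermonde
    · intro j
      rcases Nat.eq_zero_or_pos (j : ℕ) with h | h
      · simp [hP, h]
      · rw [hP]; simp only [Nat.pos_iff_ne_zero.1 h, if_neg (Nat.pos_iff_ne_zero.1 h)]
        exact bern_natDegree _
    · intro j
      rcases Nat.eq_zero_or_pos (j : ℕ) with h | h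
      · simp [hP, h, Polynomial.monic_one]
      · rw [hP]; simp only [if_neg (Nat.pos_iff_ne_zero.1 h)]
        exact bern_monic _
  -- row reduction
  have hMB : bigM.det = bigB.det := by
    apply Matrix.det_eq_of_forall_row_eq_smul_add_pred (fun _ => 1)
    · intro j; simp [hbigB]
    · intro i j; simp [hbigB]
  -- expand along column 0
  have hBexp : bigB.det =
      (Matrix.of fun (i j : Fin m) => bigM i.succ j.succ - bigM i.castSucc j.succ).det := by
    rw [Matrix.det_succ_column_zero, Fin.sum_univ_succ]
    have h00 : bigB 0 0 = 1 := by
      simp [hbigB, hbigM, hP0]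
    have h0s : ∀ i : Fin m, bigB i.succ 0 = 0 := by
      intro i; simp [hbigB, hbigM, hP0]
    rw [h00]
    simp only [h0s, mul_zero, zero_mul, Finset.sum_const_zero, add_zero]
    rw [Fin.succAbove_zero]
    simp only [Fin.val_zero, pow_zero, one_mul]
    congr 1
  -- column scaling
  have hcol : (Matrix.of fun (i j : Fin m) => bigM i.succ j.succ - bigM i.castSucc j.succ).det =
      (∏ j : Fin m, ((j : ℚ) + 1)) *
      (Matrix.of fun (i j : Fin m) =>
        ∑ t ∈ Finset.Ico (c i.castSucc) (c i.succ), (t : ℚ) ^ (j : ℕ)).det := by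
    rw [← Matrix.det_mul_row (fun j : Fin m => ((j : ℚ) + 1))]
    congr 1
    ext i j
    simp only [Matrix.of_apply, hbigM, hPsucc]
    exact eval_sub_eval (j : ℕ) _ _ (hc i)
  -- multilinearity
  have hsum : (Matrix.of fun (i j : Fin m) =>
        ∑ t ∈ Finset.Ico (c i.castSucc) (c i.succ), (t : ℚ) ^ (j : ℕ)).det =
      ∑ d ∈ Fintype.piFinset (fun i : Fin m => Finset.Ico (c i.castSucc) (c i.succ)),
        (Matrix.vandermonde fun i => (d i : ℚ)).det := by
    have key := (Matrix.detRowAlternating :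
        (Fin m → ℚ) [⋀^Fin m]→ₗ[ℚ] ℚ).toMultilinearMap.map_sum_finset
      (fun i (t : ℕ) => (fun j : Fin m => (t : ℚ) ^ (j : ℕ)))
      (fun i : Fin m => Finset.Ico (c i.castSucc) (c i.succ))
    have lhs_eq : (Matrix.of fun (i j : Fin m) =>
        ∑ t ∈ Finset.Ico (c i.castSucc) (c i.succ), (t : ℚ) ^ (j : ℕ)) =
        (fun i => ∑ t ∈ Finset.Ico (c i.castSucc) (c i.succ),
          (fun j : Fin m => (t : ℚ) ^ (j : ℕ))) := by
      ext i j
      simp [Finset.sum_apply]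
    rw [lhs_eq]
    exact key
  calc (m.factorial : ℚ) *
      ∑ d ∈ Fintype.piFinset (fun i : Fin m => Finset.Ico (c i.castSucc) (c i.succ)),
        ∏ i, ∏ j ∈ Finset.Ioi i, ((d j : ℚ) - (d i : ℚ))
      = (∏ j : Fin m, ((j : ℚ) + 1)) *
        ∑ d ∈ Fintype.piFinset (fun i : Fin m => Finset.Ico (c i.castSucc) (c i.succ)),
          (Matrix.vandermonde fun i => (d i : ℚ)).det := by
        rw [fact_prod]
        congr 1
        apply Finset.sum_congr rfl
        intro d _
        rw [Matrix.det_vandermonde]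
    _ = ∏ i, ∏ j ∈ Finset.Ioi i, ((c j : ℚ) - (c i : ℚ)) := by
        rw [← hsum, ← hcol, ← hBexp, ← hMB, hvdm]


lemma ioi_filter (k : ℕ) (i : Fin k) :
    Finset.Ioi i = Finset.univ.filter (fun j => i < j) := by
  ext j; simp

lemma prod_pairs (k : ℕ) (f : Fin k → Fin k → ℚ) :
    ∏ p ∈ Finset.univ.filter (fun p : Fin k × Fin k => p.1 < p.2), f p.1 p.2
      = ∏ i, ∏ j ∈ Finset.Ioi i, f i j := by
  rw [Finset.prod_filter, ← Finset.univ_product_univ, Finset.prod_product]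
  apply Finset.prod_congr rfl
  intro i _
  rw [ioi_filter, Finset.prod_filter]

lemma prod_rev (k : ℕ) (f : Fin k → Fin k → ℚ) :
    (∏ i, ∏ j ∈ Finset.Ioi i, f i j) = ∏ i : Fin k, ∏ j ∈ Finset.Ioi i, f (Fin.rev j) (Fin.rev i) := by
  rw [← prod_pairs, ← prod_pairs]
  refine Finset.prod_bij' (fun p _ => (p.2.rev, p.1.rev)) (fun p _ => (p.2.rev, p.1.rev))
    ?_ ?_ ?_ ?_ ?_
  · intro p hp
    simp only [Finset.mem_filter, Finset.mem_univ, true_and] at hp ⊢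
    exact Fin.rev_lt_rev.2 hp
  · intro p hp
    simp only [Finset.mem_filter, Finset.mem_univ, true_and] at hp ⊢
    exact Fin.rev_lt_rev.2 hp
  · intro p _; simp [Fin.rev_rev]
  · intro p _; simp [Fin.rev_rev]
  · intro p _; simp [Fin.rev_rev]


abbrev Cell (n : ℕ) (lam : Fin n → ℕ) := {p : Fin n × ℕ // p.2 < lam p.1}

def SSYTc (n : ℕ) (lam : Fin n → ℕ) :=
  {T : Cell n lam → Fin n //
    (∀ p q : Cell n lam, p.1.1 = q.1.1 → p.1.2 ≤ q.1.2 → T p ≤ T q) ∧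
    (∀ p q : Cell n lam, p.1.2 = q.1.2 → p.1.1 < q.1.1 → T p < T q)}

instance cellFinite (n : ℕ) (lam : Fin n → ℕ) : Finite (Cell n lam) := by
  apply Finite.of_injective (fun p : Cell n lam =>
    ((p.1.1, ⟨p.1.2, lt_of_lt_of_le p.2 (Finset.le_sup (Finset.mem_univ p.1.1))⟩) :
      Fin n × Fin (Finset.univ.sup lam)))
  rintro ⟨⟨a, b⟩, hab⟩ ⟨⟨a', b'⟩, hab'⟩ h
  simp only [Prod.mk.injEq, Fin.mk.injEq] at h
  apply Subtype.ext
  simp [h.1, h.2]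

instance ssytFinite (n : ℕ) (lam : Fin n → ℕ) : Finite (SSYTc n lam) := by
  unfold SSYTc
  infer_instance

/-- reconstruction of a big tableau from (μ, T') -/
def recon (n : ℕ) (lam : Fin (n + 1) → ℕ) (μ : Fin n → ℕ) (T' : Cell n μ → Fin n) :
    Cell (n + 1) lam → Fin (n + 1) := fun c =>
  if h1 : (c.1.1 : ℕ) < n then
    if h2 : c.1.2 < μ ⟨(c.1.1 : ℕ), h1⟩ then
      (T' ⟨(⟨(c.1.1 : ℕ), h1⟩, c.1.2), h2⟩).castSucc
    else Fin.last n
  else Fin.last n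

section ReconFacts

variable {n : ℕ} {lam : Fin (n + 1) → ℕ} (hlam : Antitone lam)
variable {μ : Fin n → ℕ} (hμ1 : ∀ i, lam i.succ ≤ μ i) (hμ2 : ∀ i, μ i ≤ lam i.castSucc)

include hlam hμ1 hμ2 in
lemma mu_anti : Antitone μ := by
  intro a b hab
  rcases eq_or_lt_of_le hab with rfl | hab
  · exact le_rfl
  · have h1 : a.succ ≤ b.castSucc := by
      rw [Fin.le_def]
      simp only [Fin.val_succ, Fin.coe_castSucc]
      rw [Fin.lt_def] at hab
      omega
    exact le_trans (hμ2 b) (le_trans (hlam h1) (hμ1 a))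

include hlam hμ1 in
/-- any cell strictly above an existing cell is in the region -/
lemma above_in_region (p q : Cell (n + 1) lam) (hj : p.1.2 = q.1.2) (hij : p.1.1 < q.1.1) :
    ∃ h1 : (p.1.1 : ℕ) < n, p.1.2 < μ ⟨(p.1.1 : ℕ), h1⟩ := by
  have h1 : (p.1.1 : ℕ) < n := by
    have := hij
    rw [Fin.lt_def] at this
    have := q.1.1.is_le
    omega
  refine ⟨h1, ?_⟩
  set a : Fin n := ⟨(p.1.1 : ℕ), h1⟩
  have hsle : a.succ ≤ q.1.1 := by
    rw [Fin.le_def]; simp only [Fin.val_succ]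
    rw [Fin.lt_def] at hij; exact hij
  calc p.1.2 = q.1.2 := hj
    _ < lam q.1.1 := q.2
    _ ≤ lam a.succ := hlam hsle
    _ ≤ μ a := hμ1 a

include hlam hμ1 hμ2 in
lemma recon_is_ssyt (T' : Cell n μ → Fin n)
    (hrow : ∀ p q : Cell n μ, p.1.1 = q.1.1 → p.1.2 ≤ q.1.2 → T' p ≤ T' q)
    (hcol : ∀ p q : Cell n μ, p.1.2 = q.1.2 → p.1.1 < q.1.1 → T' p < T' q) :
    (∀ p q : Cell (n + 1) lam, p.1.1 = q.1.1 → p.1.2 ≤ q.1.2 →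
      recon n lam μ T' p ≤ recon n lam μ T' q) ∧
    (∀ p q : Cell (n + 1) lam, p.1.2 = q.1.2 → p.1.1 < q.1.1 →
      recon n lam μ T' p < recon n lam μ T' q) := by
  constructor
  · intro p q hi hj
    unfold recon
    by_cases h1 : (q.1.1 : ℕ) < n
    · have h1p : (p.1.1 : ℕ) < n := hi ▸ h1
      by_cases h2 : q.1.2 < μ ⟨(q.1.1 : ℕ), h1⟩
      · have h2p : p.1.2 < μ ⟨(p.1.1 : ℕ), h1p⟩ := by
          have : (⟨(p.1.1 : ℕ), h1p⟩ : Fin n) = ⟨(q.1.1 : ℕ), h1⟩ := by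
            simp [hi]
          rw [this]; omega
        rw [dif_pos h1, dif_pos h1p, dif_pos h2, dif_pos h2p]
        rw [Fin.castSucc_le_castSucc_iff]
        apply hrow
        · simp [hi]
        · exact hj
      · rw [dif_pos h1, dif_neg h2]
        exact Fin.le_last _
    · rw [dif_neg h1]
      exact Fin.le_last _
  · intro p q hj hij
    obtain ⟨h1p, h2p⟩ := above_in_region hlam hμ1 p q hj hij
    unfold recon
    rw [dif_pos h1p, dif_pos h2p]
    by_cases h1 : (q.1.1 : ℕ) < n
    · by_cases h2 : q.1.2 < μ ⟨(q.1.1 : ℕ), h1⟩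
      · rw [dif_pos h1, dif_pos h2]
        rw [Fin.castSucc_lt_castSucc_iff]
        apply hcol
        · exact hj
        · rw [Fin.lt_def] at hij ⊢; exact hij
      · rw [dif_pos h1, dif_neg h2]
        exact Fin.castSucc_lt_last _
    · rw [dif_neg h1]
      exact Fin.castSucc_lt_last _

end ReconFacts

section Decon

variable {n : ℕ} {lam : Fin (n + 1) → ℕ} (hlam : Antitone lam)
variable (T : Cell (n + 1) lam → Fin (n + 1))
variable (hrow : ∀ p q : Cell (n + 1) lam, p.1.1 = q.1.1 → p.1.2 ≤ q.1.2 → T p ≤ T q)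
variable (hcol : ∀ p q : Cell (n + 1) lam, p.1.2 = q.1.2 → p.1.1 < q.1.1 → T p < T q)

/-- padded entry function -/
def padT (i : Fin (n + 1)) (j : ℕ) : ℕ :=
  if h : j < lam i then (T ⟨(i, j), h⟩ : ℕ) else n

lemma padT_in (i : Fin (n + 1)) (j : ℕ) (h : j < lam i) : padT T i j = (T ⟨(i, j), h⟩ : ℕ) :=
  dif_pos h

lemma padT_le (i : Fin (n + 1)) (j : ℕ) : padT T i j ≤ n := by
  unfold padT
  split_ifs with h
  · exact Fin.is_le _
  · exact le_rfl

include hrow in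
lemma padT_mono (i : Fin (n + 1)) : Monotone (padT T i) := by
  intro j j' hj
  unfold padT
  split_ifs with h h'
  · exact hrow _ _ rfl hj
  · exact Fin.is_le _
  · omega
  · exact le_rfl

lemma exP (i : Fin (n + 1)) : ∃ j, lam i ≤ j ∨ n ≤ padT T i j := ⟨lam i, Or.inl le_rfl⟩

/-- the shape obtained by removing letters equal to n -/
def muT : Fin n → ℕ := fun i => Nat.find (exP T i.castSucc)

lemma muT_le (i : Fin n) : muT T i ≤ lam i.castSucc := Nat.find_le (Or.inl le_rfl)

include hlam hcol in
lemma le_muT (i : Fin n) : lam i.succ ≤ muT T i := by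
  rw [muT, Nat.le_find_iff]
  intro m hm
  push_neg
  have hcs : lam i.succ ≤ lam i.castSucc := hlam (le_of_lt (Fin.castSucc_lt_succ : i.castSucc < i.succ))
  constructor
  · omega
  · have hcell : m < lam i.castSucc := by omega
    rw [padT_in T _ _ hcell]
    have := hcol ⟨(i.castSucc, m), hcell⟩ ⟨(i.succ, m), hm⟩ rfl (Fin.castSucc_lt_succ : i.castSucc < i.succ)
    rw [Fin.lt_def] at this
    have h2 := (T ⟨(i.succ, m), hm⟩).is_le
    omega

lemma muT_lt_n (i : Fin n) (j : ℕ) (hj : j < muT T i) :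
    ∃ h : j < lam i.castSucc, (T ⟨(i.castSucc, j), h⟩ : ℕ) < n := by
  have := Nat.find_min (exP T i.castSucc) hj
  push_neg at this
  obtain ⟨h1, h2⟩ := this
  exact ⟨h1, by rw [← padT_in]; omega⟩

include hrow in
lemma muT_eq_n (i : Fin n) (j : ℕ) (hle : muT T i ≤ j) (hj : j < lam i.castSucc) :
    (T ⟨(i.castSucc, j), hj⟩ : ℕ) = n := by
  have hspec := Nat.find_spec (exP T i.castSucc)
  change lam i.castSucc ≤ muT T i ∨ n ≤ padT T i.castSucc (muT T i) at hspec
  rcases hspec with h | h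
  · omega
  · have hmono := padT_mono T hrow i.castSucc hle
    have hle2 := padT_le T i.castSucc j
    rw [padT_in T _ _ hj] at hmono hle2
    omega

include hlam hcol in
lemma last_row_eq (j : ℕ) (h : j < lam (Fin.last n)) : T ⟨(Fin.last n, j), h⟩ = Fin.last n := by
  have key : ∀ (v : ℕ) (k : Fin (n + 1)) (hk : (k : ℕ) = v) (j : ℕ) (h : j < lam k),
      v ≤ (T ⟨(k, j), h⟩ : ℕ) := by
    intro v
    induction v with
    | zero => intro _ _ _ _; exact Nat.zero_le _
    | succ v ih =>
      intro k hk j h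
      set k' : Fin (n + 1) := ⟨v, by omega⟩ with hk'
      have hlt : k' < k := by rw [Fin.lt_def]; simp [hk']; omega
      have hcell : j < lam k' := lt_of_lt_of_le h (hlam (le_of_lt hlt))
      have := hcol ⟨(k', j), hcell⟩ ⟨(k, j), h⟩ rfl hlt
      rw [Fin.lt_def] at this
      have := ih k' rfl j hcell
      omega
  have h1 := key n (Fin.last n) (by simp) j h
  have h2 := (T ⟨(Fin.last n, j), h⟩).is_le
  apply Fin.ext
  simp only [Fin.val_last]
  omega

/-- the sub-tableau -/
def subT : Cell n (muT T) → Fin n := fun c =>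
  ⟨(T ⟨(c.1.1.castSucc, c.1.2), lt_of_lt_of_le c.2 (muT_le T c.1.1)⟩ : ℕ),
    by
      obtain ⟨h, hlt⟩ := muT_lt_n T c.1.1 c.1.2 c.2
      exact hlt⟩

include hrow in
lemma subT_row : ∀ p q : Cell n (muT T), p.1.1 = q.1.1 → p.1.2 ≤ q.1.2 →
    subT T p ≤ subT T q := by
  rintro ⟨⟨pi, pj⟩, hp⟩ ⟨⟨qi, qj⟩, hq⟩ hi hj
  simp only at hi hj
  subst hi
  unfold subT
  rw [Fin.le_def]
  simp only
  have := hrow ⟨(pi.castSucc, pj), lt_of_lt_of_le hp (muT_le T pi)⟩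
    ⟨(pi.castSucc, qj), lt_of_lt_of_le hq (muT_le T pi)⟩ rfl hj
  rw [Fin.le_def] at this
  exact this

include hcol in
lemma subT_col : ∀ p q : Cell n (muT T), p.1.2 = q.1.2 → p.1.1 < q.1.1 →
    subT T p < subT T q := by
  rintro ⟨⟨pi, pj⟩, hp⟩ ⟨⟨qi, qj⟩, hq⟩ hj hi
  simp only at hj hi
  subst hj
  unfold subT
  rw [Fin.lt_def]
  simp only
  have := hcol ⟨(pi.castSucc, pj), lt_of_lt_of_le hp (muT_le T pi)⟩
    ⟨(qi.castSucc, pj), lt_of_lt_of_le hq (muT_le T qi)⟩ rfl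
    (by rwa [Fin.castSucc_lt_castSucc_iff])
  rw [Fin.lt_def] at this
  exact this

end Decon

lemma branch (n : ℕ) (lam : Fin (n + 1) → ℕ) (hlam : Antitone lam) :
    Nat.card (SSYTc (n + 1) lam) =
      ∑ μ ∈ Fintype.piFinset (fun i : Fin n => Finset.Icc (lam i.succ) (lam i.castSucc)),
        Nat.card (SSYTc n μ) := by
  classical
  set S := Fintype.piFinset (fun i : Fin n => Finset.Icc (lam i.succ) (lam i.castSucc)) with hS
  have memS : ∀ μ : Fin n → ℕ, μ ∈ S → ∀ i, lam i.succ ≤ μ i ∧ μ i ≤ lam i.castSucc := by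
    intro μ hμ i
    rw [hS, Fintype.mem_piFinset] at hμ
    have := hμ i
    rwa [Finset.mem_Icc] at this
  let F : (Σ μ : {x // x ∈ S}, SSYTc n μ.1) → SSYTc (n + 1) lam := fun s =>
    ⟨recon n lam s.1.1 s.2.1,
      recon_is_ssyt hlam (fun i => (memS s.1.1 s.1.2 i).1) (fun i => (memS s.1.1 s.1.2 i).2)
        s.2.1 s.2.2.1 s.2.2.2⟩
  have key : ∀ (μ1 μ2 : Fin n → ℕ), μ1 ∈ S → μ2 ∈ S →
      ∀ (T1 : Cell n μ1 → Fin n) (T2 : Cell n μ2 → Fin n),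
      recon n lam μ1 T1 = recon n lam μ2 T2 → ∀ i, μ2 i ≤ μ1 i := by
    intro μ1 μ2 m1 m2 T1 T2 hV i
    by_contra hlt
    push_neg at hlt
    have hub : μ2 i ≤ lam i.castSucc := (memS μ2 m2 i).2
    have hcell : μ1 i < lam i.castSucc := lt_of_lt_of_le hlt hub
    have h1 : ((i.castSucc : Fin (n + 1)) : ℕ) < n := by simp
    have e := congrFun hV ⟨(i.castSucc, μ1 i), hcell⟩
    unfold recon at e
    rw [dif_pos h1, dif_pos h1,
      dif_neg (show ¬ μ1 i < μ1 ⟨((i.castSucc : Fin (n + 1)) : ℕ), h1⟩ from lt_irrefl _),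
      dif_pos (show μ1 i < μ2 ⟨((i.castSucc : Fin (n + 1)) : ℕ), h1⟩ from hlt)] at e
    exact absurd e.symm (ne_of_lt (Fin.castSucc_lt_last _))
  have hinj : Function.Injective F := by
    rintro ⟨⟨μ1, m1⟩, ⟨T1, c1⟩⟩ ⟨⟨μ2, m2⟩, ⟨T2, c2⟩⟩ h
    have hV : recon n lam μ1 T1 = recon n lam μ2 T2 := congrArg Subtype.val h
    have hμ : μ1 = μ2 := funext fun i =>
      le_antisymm (key μ2 μ1 m2 m1 T2 T1 hV.symm i) (key μ1 μ2 m1 m2 T1 T2 hV i)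
    subst hμ
    have hT : T1 = T2 := by
      funext c
      obtain ⟨⟨ci, cj⟩, hc⟩ := c
      have hcell : cj < lam ci.castSucc := lt_of_lt_of_le hc ((memS μ1 m1 ci).2)
      have h1 : ((ci.castSucc : Fin (n + 1)) : ℕ) < n := by simp
      have e := congrFun hV ⟨(ci.castSucc, cj), hcell⟩
      unfold recon at e
      rw [dif_pos h1, dif_pos h1,
        dif_pos (show cj < μ1 ⟨((ci.castSucc : Fin (n + 1)) : ℕ), h1⟩ from hc),
        dif_pos (show cj < μ1 ⟨((ci.castSucc : Fin (n + 1)) : ℕ), h1⟩ from hc)] at e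
      exact Fin.castSucc_inj.1 e
    subst hT
    rfl
  have hsurj : Function.Surjective F := by
    rintro ⟨T, hTrow, hTcol⟩
    refine ⟨⟨⟨muT T, ?_⟩, ⟨subT T, subT_row T hTrow, subT_col T hTcol⟩⟩, ?_⟩
    · rw [hS, Fintype.mem_piFinset]
      intro i
      rw [Finset.mem_Icc]
      exact ⟨le_muT hlam T hTcol i, muT_le T i⟩
    · apply Subtype.ext
      funext c
      obtain ⟨⟨ci, cj⟩, hc⟩ := c
      show recon n lam (muT T) (subT T) ⟨(ci, cj), hc⟩ = T ⟨(ci, cj), hc⟩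
      unfold recon
      by_cases h1 : (ci : ℕ) < n
      · have hci : (⟨(ci : ℕ), h1⟩ : Fin n).castSucc = ci := Fin.ext rfl
        by_cases h2 : cj < muT T ⟨(ci : ℕ), h1⟩
        · rw [dif_pos h1, dif_pos h2]
          apply Fin.ext
          rw [Fin.coe_castSucc]
          show (T ⟨((⟨(ci : ℕ), h1⟩ : Fin n).castSucc, cj), _⟩ : ℕ) = _
          congr 1
        · rw [dif_pos h1, dif_neg h2]
          push_neg at h2
          have hcell : cj < lam (⟨(ci : ℕ), h1⟩ : Fin n).castSucc := by rwa [hci]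
          have hval := muT_eq_n T hTrow ⟨(ci : ℕ), h1⟩ cj h2 hcell
          symm
          apply Fin.ext
          rw [Fin.val_last]
          have : (⟨((⟨(ci : ℕ), h1⟩ : Fin n).castSucc, cj), hcell⟩ : Cell (n + 1) lam)
              = ⟨(ci, cj), hc⟩ := by
            apply Subtype.ext
            show ((⟨(ci : ℕ), h1⟩ : Fin n).castSucc, cj) = (ci, cj)
            rw [hci]
          rwa [this] at hval
      · rw [dif_neg h1]
        have hlast : ci = Fin.last n := Fin.ext (by have := ci.is_le; simp [Fin.val_last]; omega)
        subst hlast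
        exact (last_row_eq hlam T hTcol cj hc).symm
  -- cardinality bookkeeping
  letI : ∀ μ : Fin n → ℕ, Fintype (SSYTc n μ) := fun μ => Fintype.ofFinite _
  letI : Fintype {x // x ∈ S} := FinsetCoe.fintype S
  rw [← Nat.card_eq_of_bijective F ⟨hinj, hsurj⟩]
  rw [Nat.card_eq_fintype_card, Fintype.card_sigma]
  rw [← Finset.sum_coe_sort S (fun μ => Nat.card (SSYTc n μ))]
  apply Finset.sum_congr rfl
  intro μ _
  rw [Nat.card_eq_fintype_card]


/-- shifting an arbitrary `g` to the strictly-increasing reversed version -/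
lemma shift_prod (k : ℕ) (g : Fin k → ℕ) :
    (∏ i, ∏ j ∈ Finset.Ioi i, ((g i : ℚ) - (g j : ℚ) + (j : ℚ) - (i : ℚ)))
      = ∏ i : Fin k, ∏ j ∈ Finset.Ioi i,
          (((g j.rev + (j : ℕ) : ℕ) : ℚ) - ((g i.rev + (i : ℕ) : ℕ) : ℚ)) := by
  rw [prod_rev k (fun i j => ((g j.rev + (j : ℕ) : ℕ) : ℚ) - ((g i.rev + (i : ℕ) : ℕ) : ℚ))]
  apply Finset.prod_congr rfl
  intro i _
  apply Finset.prod_congr rfl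
  intro j hj
  have hi : (i : ℕ) < k := i.isLt
  have hjk : (j : ℕ) < k := j.isLt
  rw [Fin.rev_rev, Fin.rev_rev, Fin.val_rev, Fin.val_rev]
  push_cast [Nat.cast_sub (by omega : (j : ℕ) + 1 ≤ k), Nat.cast_sub (by omega : (i : ℕ) + 1 ≤ k)]
  ring

lemma dfact (n : ℕ) :
    (∏ i : Fin (n + 1), ∏ j ∈ Finset.Ioi i, ((j : ℚ) - (i : ℚ)))
      = (n.factorial : ℚ) * ∏ i : Fin n, ∏ j ∈ Finset.Ioi i, ((j : ℚ) - (i : ℚ)) := by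
  have h := lemA n (fun j => (j : ℕ)) (fun i => by simp)
  have hsingle : Fintype.piFinset (fun i : Fin n => Finset.Ico
      ((i.castSucc : ℕ)) ((i.succ : ℕ))) = {fun i : Fin n => (i : ℕ)} := by
    ext d
    rw [Fintype.mem_piFinset, Finset.mem_singleton]
    simp only [Fin.coe_castSucc, Fin.val_succ]
    constructor
    · intro hd
      funext i
      have := hd i
      rw [Finset.mem_Ico] at this
      show d i = (i : ℕ)
      omega
    · intro hd i
      rw [hd, Finset.mem_Ico]
      show (i : ℕ) ≤ (i : ℕ) ∧ (i : ℕ) < (i : ℕ) + 1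
      omega
  rw [hsingle, Finset.sum_singleton] at h
  rw [← h]

lemma card_zero (lam : Fin 0 → ℕ) : Nat.card (SSYTc 0 lam) = 1 := by
  have : Unique (SSYTc 0 lam) :=
    { default := ⟨fun c => (c.1.1).elim0, fun p => (p.1.1).elim0, fun p => (p.1.1).elim0⟩
      uniq := fun a => Subtype.ext (funext fun c => (c.1.1).elim0) }
  exact Nat.card_unique

lemma card_ssyt (n : ℕ) (lam : Fin n → ℕ) (hlam : Antitone lam) :
    (Nat.card (SSYTc n lam) : ℚ) * ∏ i : Fin n, ∏ j ∈ Finset.Ioi i, ((j : ℚ) - (i : ℚ))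
      = ∏ i : Fin n, ∏ j ∈ Finset.Ioi i, ((lam i : ℚ) - (lam j : ℚ) + (j : ℚ) - (i : ℚ)) := by
  induction n with
  | zero =>
    rw [card_zero]
    simp
  | succ n ih =>
    rw [branch n lam hlam]
    set c : Fin (n + 1) → ℕ := fun j => lam j.rev + (j : ℕ) with hc
    have hcmono : ∀ i : Fin n, c i.castSucc ≤ c i.succ := by
      intro i
      simp only [hc, Fin.rev_castSucc, Fin.rev_succ, Fin.coe_castSucc, Fin.val_succ]
      have := hlam (le_of_lt (Fin.castSucc_lt_succ : i.rev.castSucc < i.rev.succ))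
      omega
    -- the reindexed sum
    have hsum : (∑ μ ∈ Fintype.piFinset
          (fun i : Fin n => Finset.Icc (lam i.succ) (lam i.castSucc)),
          ∏ i : Fin n, ∏ j ∈ Finset.Ioi i, ((μ i : ℚ) - (μ j : ℚ) + (j : ℚ) - (i : ℚ)))
        = ∑ d ∈ Fintype.piFinset (fun i : Fin n => Finset.Ico (c i.castSucc) (c i.succ)),
          ∏ i : Fin n, ∏ j ∈ Finset.Ioi i, ((d j : ℚ) - (d i : ℚ)) := by
      refine Finset.sum_bij' (fun μ _ => fun t : Fin n => μ t.rev + (t : ℕ))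
        (fun d _ => fun t : Fin n => d t.rev - (t.rev : ℕ)) ?_ ?_ ?_ ?_ ?_
      · intro μ hμ
        rw [Fintype.mem_piFinset] at hμ ⊢
        intro i
        show μ i.rev + (i : ℕ) ∈ Finset.Ico (c i.castSucc) (c i.succ)
        have h1 := hμ i.rev
        rw [Finset.mem_Icc] at h1
        rw [Finset.mem_Ico]
        simp only [hc, Fin.rev_castSucc, Fin.rev_succ, Fin.coe_castSucc, Fin.val_succ,
          Fin.rev_rev]
        omega
      · intro d hd
        rw [Fintype.mem_piFinset] at hd ⊢
        intro i
        show d i.rev - (i.rev : ℕ) ∈ Finset.Icc (lam i.succ) (lam i.castSucc)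
        have h1 := hd i.rev
        rw [Finset.mem_Ico] at h1
        rw [Finset.mem_Icc]
        simp only [hc, Fin.rev_castSucc, Fin.rev_succ, Fin.coe_castSucc, Fin.val_succ,
          Fin.rev_rev] at h1
        omega
      · intro μ hμ
        funext t
        show μ t.rev.rev + (t.rev : ℕ) - (t.rev : ℕ) = μ t
        rw [Fin.rev_rev]
        omega
      · intro d hd
        rw [Fintype.mem_piFinset] at hd
        funext t
        show d t.rev.rev - (t.rev.rev : ℕ) + (t : ℕ) = d t
        rw [Fin.rev_rev]
        have h1 := hd t
        rw [Finset.mem_Ico] at h1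
        simp only [hc, Fin.rev_castSucc, Fin.rev_succ, Fin.coe_castSucc, Fin.val_succ] at h1
        omega
      · intro μ hμ
        exact shift_prod n μ
    calc ((∑ μ ∈ Fintype.piFinset
          (fun i : Fin n => Finset.Icc (lam i.succ) (lam i.castSucc)),
          Nat.card (SSYTc n μ) : ℕ) : ℚ) * ∏ i : Fin (n + 1), ∏ j ∈ Finset.Ioi i, ((j : ℚ) - (i : ℚ))
        = (n.factorial : ℚ) * ∑ μ ∈ Fintype.piFinset
            (fun i : Fin n => Finset.Icc (lam i.succ) (lam i.castSucc)),
            ((Nat.card (SSYTc n μ) : ℚ) *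
              ∏ i : Fin n, ∏ j ∈ Finset.Ioi i, ((j : ℚ) - (i : ℚ))) := by
          rw [dfact]
          push_cast
          rw [Finset.sum_mul, Finset.mul_sum]
          apply Finset.sum_congr rfl
          intro μ _
          ring
      _ = (n.factorial : ℚ) * ∑ μ ∈ Fintype.piFinset
            (fun i : Fin n => Finset.Icc (lam i.succ) (lam i.castSucc)),
            ∏ i : Fin n, ∏ j ∈ Finset.Ioi i, ((μ i : ℚ) - (μ j : ℚ) + (j : ℚ) - (i : ℚ)) := by
          congr 1
          apply Finset.sum_congr rfl
          intro μ hμ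
          apply ih
          -- μ is antitone
          rw [Fintype.mem_piFinset] at hμ
          intro a b hab
          rcases eq_or_lt_of_le hab with rfl | hab'
          · exact le_rfl
          · have h1 := hμ a
            have h2 := hμ b
            rw [Finset.mem_Icc] at h1 h2
            have hle : a.succ ≤ b.castSucc := by
              rw [Fin.le_def]
              simp only [Fin.val_succ, Fin.coe_castSucc]
              rw [Fin.lt_def] at hab'
              omega
            exact le_trans h2.2 (le_trans (hlam hle) h1.1)
      _ = ∏ i : Fin (n + 1), ∏ j ∈ Finset.Ioi i, ((lam i : ℚ) - (lam j : ℚ) + (j : ℚ) - (i : ℚ)) := by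
          rw [hsum, lemA n c hcmono, shift_prod (n + 1) lam]


open Finset

/-- The number of semistandard Young tableaux of shape `λ` (a partition with at most `n`
parts, given as an antitone function `lam : Fin n → ℕ`) with entries in `{1,…,n}`
(modelled as `Fin n`) equals the dimension of the irreducible polynomial representation
of `GL_n(ℂ)` with highest weight `λ`, given by the Weyl dimension formula
`∏_{i<j} (λ_i - λ_j + j - i)/(j - i)`; stated in cross-multiplied form over `ℚ`. -/
theorem ssyt_count_eq_weyl_dim (n : ℕ) (lam : Fin n → ℕ) (hlam : Antitone lam) :
    (Nat.card {T : {p : Fin n × ℕ // p.2 < lam p.1} → Fin n //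
        (∀ p q : {p : Fin n × ℕ // p.2 < lam p.1},
          p.1.1 = q.1.1 → p.1.2 ≤ q.1.2 → T p ≤ T q) ∧
        (∀ p q : {p : Fin n × ℕ // p.2 < lam p.1},
          p.1.2 = q.1.2 → p.1.1 < q.1.1 → T p < T q)} : ℚ) *
      ∏ p ∈ Finset.univ.filter (fun p : Fin n × Fin n => p.1 < p.2),
        ((p.2 : ℚ) - (p.1 : ℚ)) =
    ∏ p ∈ Finset.univ.filter (fun p : Fin n × Fin n => p.1 < p.2),
        ((lam p.1 : ℚ) - (lam p.2 : ℚ) + (p.2 : ℚ) - (p.1 : ℚ)) := by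
  rw [prod_pairs n (fun i j => (j : ℚ) - (i : ℚ)),
    prod_pairs n (fun i j => (lam i : ℚ) - (lam j : ℚ) + (j : ℚ) - (i : ℚ))]
  exact card_ssyt n lam hlam
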